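/- Let A ⊆ ℝ³ be a Delone set with packing radius r > 0 and covering radius R < ∞. Then for every a ∈ A and every k ≥ 1, the k-th Dirichlet–Voronoi domain D_k(a;A) is a bounded set; specifically, it is contained in the closed ball of radius 2R·(k)^{1/3} + 2R around a. -/
import Mathlib


open MeasureTheory Set Metric Pointwise

noncomputable section

/-- 3-dimensional Euclidean space. -/
abbrev E3 := EuclideanSpace ℝ (Fin 3)

/-- The lattice generated by the vectors `b 0, b 1, b 2`. -/
def lat (b : Fin 3 → E3) : Set E3 := {x | ∃ n : Fin 3 → ℤ, x = ∑ i, (n i : ℝ) • b i}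

/-- The unit cell spanned by the vectors `b 0, b 1, b 2`. -/
def cell (b : Fin 3 → E3) : Set E3 :=
  {x | ∃ c : Fin 3 → ℝ, (∀ i, 0 ≤ c i ∧ c i < 1) ∧ x = ∑ i, c i • b i}

/-- The `k`-fold cover: points lying in at least `k` closed balls of radius `t`
centered at points of `A`. -/
def coverGE (A : Set E3) (t : ℝ) (k : ℕ) : Set E3 :=
  {x | ∃ F : Finset E3, F.card = k ∧ ↑F ⊆ A ∧ ∀ a ∈ F, dist x a ≤ t}

/-- Points lying in exactly `k` closed balls of radius `t` centered at points of `A`. -/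
def coverEQ (A : Set E3) (t : ℝ) (k : ℕ) : Set E3 :=
  {x | ∃ F : Finset E3, ↑F = {a ∈ A | dist x a ≤ t} ∧ F.card = k}

/-- The `k`-th Dirichlet–Voronoi domain of `a` in `A` (with `D_0 = ∅`). -/
def DV (A : Set E3) (a : E3) : ℕ → Set E3
  | 0 => ∅
  | (k+1) => {x | ({b ∈ A | dist x b < dist x a}).ncard ≤ k}

/-- The `k`-th Brillouin zone of `a` in `A`. -/
def BZ (A : Set E3) (a : E3) (k : ℕ) : Set E3 := DV A a k \ DV A a (k-1)

lemma inter_closedBall_finite (A : Set E3) (r : ℝ) (hr : 0 < r)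
    (hpack : ∀ a ∈ A, ∀ b ∈ A, a ≠ b → 2 * r ≤ dist a b)
    (x : E3) (ρ : ℝ) : (A ∩ closedBall x ρ).Finite := by
  obtain ⟨T, hTfin, hTcov⟩ :=
    (Metric.totallyBounded_iff.mp (isCompact_closedBall x ρ).totallyBounded) r hr
  have hsub : A ∩ closedBall x ρ ⊆ ⋃ y ∈ T, (A ∩ closedBall x ρ) ∩ ball y r := by
    intro b hb
    obtain ⟨y, hy, hby⟩ := mem_iUnion₂.mp (hTcov hb.2)
    exact mem_iUnion₂.mpr ⟨y, hy, hb, hby⟩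
  refine Set.Finite.subset (hTfin.biUnion fun y _ => ?_) hsub
  apply Set.Subsingleton.finite
  intro b hb c hc
  by_contra hne
  have h1 := hpack b hb.1.1 c hc.1.1 hne
  have h2 : dist b c < 2 * r := by
    calc dist b c ≤ dist b y + dist y c := dist_triangle ..
      _ < r + r := add_lt_add (mem_ball.mp hb.2) (by rw [dist_comm]; exact mem_ball.mp hc.2)
      _ = 2 * r := by ring
  linarith

theorem DV_bounded (A : Set E3) (r R : ℝ) (hr : 0 < r) (hR : 0 < R)
    (hpack : ∀ a ∈ A, ∀ b ∈ A, a ≠ b → 2 * r ≤ dist a b)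
    (hcover : ∀ x : E3, ∃ a ∈ A, dist x a ≤ R)
    (a : E3) (ha : a ∈ A) (k : ℕ) (hk : 1 ≤ k) :
    DV A a k ⊆ closedBall a (2 * R * (k : ℝ) ^ ((1 : ℝ) / 3) + 2 * R) := by
  obtain ⟨m, rfl⟩ : ∃ m, k = m + 1 := ⟨k - 1, (Nat.succ_pred_eq_of_pos hk).symm⟩
  intro x hx
  simp only [DV, mem_setOf_eq] at hx
  by_contra hxa
  rw [mem_closedBall, not_le] at hxa
  set u : ℝ := ((m + 1 : ℕ) : ℝ) ^ ((1 : ℝ) / 3) with hu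
  have hu1 : (1 : ℝ) ≤ u := by
    apply Real.one_le_rpow _ (by norm_num)
    exact_mod_cast Nat.one_le_iff_ne_zero.mpr (Nat.succ_ne_zero m)
  have hu0 : 0 < u := lt_of_lt_of_le one_pos hu1
  set t : ℝ := 2 * R * u + 2 * R with htdef
  have ht0 : 0 < t := by positivity
  have htR : 0 ≤ t - R := by nlinarith
  -- the set of points of A strictly closer to x than a
  have hclose_fin : {b ∈ A | dist x b < dist x a}.Finite := by
    apply (inter_closedBall_finite A r hr hpack x (dist x a)).subset
    rintro b ⟨hbA, hbd⟩
    exact ⟨hbA, mem_closedBall.mpr (by rw [dist_comm]; exact hbd.le)⟩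
  set S : Set E3 := A ∩ closedBall x t with hSdef
  have hSfin : S.Finite := inter_closedBall_finite A r hr hpack x t
  have hSsub : S ⊆ {b ∈ A | dist x b < dist x a} := by
    rintro b ⟨hbA, hbd⟩
    exact ⟨hbA, lt_of_le_of_lt (by rw [dist_comm]; exact mem_closedBall.mp hbd) hxa⟩
  have hcard : S.ncard ≤ m :=
    le_trans (Set.ncard_le_ncard hSsub hclose_fin) hx
  -- covering: ball x (t - R) is covered by closed R-balls around points of S
  set F : Finset E3 := hSfin.toFinset with hF
  have hcov : ball x (t - R) ⊆ ⋃ b ∈ F, closedBall b R := by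
    intro y hy
    obtain ⟨b, hbA, hby⟩ := hcover y
    have hbx : dist x b ≤ t := by
      calc dist x b ≤ dist x y + dist y b := dist_triangle ..
        _ ≤ (t - R) + R := add_le_add (by rw [dist_comm]; exact (mem_ball.mp hy).le) hby
        _ = t := by ring
    have hbS : b ∈ F := hSfin.mem_toFinset.mpr ⟨hbA, mem_closedBall.mpr (by rw [dist_comm]; exact hbx)⟩
    exact mem_iUnion₂.mpr ⟨b, hbS, mem_closedBall.mpr hby⟩
  -- measure estimate
  set μ := (volume : Measure E3)
  set c := μ (ball (0 : E3) 1) with hc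
  have hc0 : c ≠ 0 := (measure_ball_pos μ 0 one_pos).ne'
  have hctop : c ≠ ⊤ := measure_ball_lt_top.ne
  have hdim : Module.finrank ℝ E3 = 3 := by simp
  have hmeas : μ (ball x (t - R)) ≤ F.card • (ENNReal.ofReal (R ^ 3) * c) := by
    calc μ (ball x (t - R)) ≤ μ (⋃ b ∈ F, closedBall b R) := measure_mono hcov
      _ ≤ ∑ b ∈ F, μ (closedBall b R) := measure_biUnion_finset_le F _
      _ = ∑ _b ∈ F, ENNReal.ofReal (R ^ 3) * c := by
          refine Finset.sum_congr rfl fun b _ => ?_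
          rw [Measure.addHaar_closedBall μ b hR.le, hdim]
      _ = F.card • (ENNReal.ofReal (R ^ 3) * c) := by
          rw [Finset.sum_const]
  have hball : μ (ball x (t - R)) = ENNReal.ofReal ((t - R) ^ 3) * c := by
    rw [Measure.addHaar_ball μ x htR, hdim]
  rw [hball, nsmul_eq_mul, ← mul_assoc] at hmeas
  have hmeas2 : ENNReal.ofReal ((t - R) ^ 3) ≤ (F.card : ENNReal) * ENNReal.ofReal (R ^ 3) :=
    (ENNReal.mul_le_mul_iff_left hc0 hctop).mp hmeas
  rw [show ((F.card : ENNReal)) = ENNReal.ofReal (F.card : ℝ) by simp,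
    ← ENNReal.ofReal_mul (by positivity)] at hmeas2
  have hreal : (t - R) ^ 3 ≤ (F.card : ℝ) * R ^ 3 :=
    (ENNReal.ofReal_le_ofReal_iff (by positivity)).mp hmeas2
  -- contradiction via arithmetic
  have hFcard : (F.card : ℝ) ≤ (m : ℝ) := by
    have h1 : S.ncard = F.card := Set.ncard_eq_toFinset_card S hSfin
    have h2 : F.card ≤ m := h1 ▸ hcard
    exact_mod_cast h2
  have hu3 : u ^ 3 = ((m + 1 : ℕ) : ℝ) := by
    rw [hu, ← Real.rpow_natCast (((m + 1 : ℕ) : ℝ) ^ ((1 : ℝ) / 3)) 3,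
      ← Real.rpow_mul (Nat.cast_nonneg _)]
    norm_num
  have htR3 : (t - R) ^ 3 = R ^ 3 * (2 * u + 1) ^ 3 := by rw [htdef]; ring
  have hcube : ((m + 1 : ℕ) : ℝ) < (2 * u + 1) ^ 3 := by
    rw [← hu3]
    nlinarith [hu0, hu1]
  have : ((m + 1 : ℕ) : ℝ) ≤ (m : ℝ) := by
    have hR3 : 0 < R ^ 3 := by positivity
    nlinarith [hreal, hcube, htR3, hFcard, hR3]
  push_cast at this
  linarith
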